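/- Let μ, ν ∈ 𝓜 with μ(ℝ) = ν(ℝ). If μ ≤_cd ν, then for every supermartingale coupling π ∈ Π_Sup(μ,ν) one has V(μ,ν) = ∫ |x − π̄_x| μ(dx) = |μ̄ − ν̄| = μ̄ − ν̄. Symmetrically, if μ ≤_ci ν, then for every submartingale coupling π ∈ Π_Sub(μ,ν) one has V(μ,ν) = ∫ |x − π̄_x| μ(dx) = |μ̄ − ν̄| = ν̄ − μ̄. -/
import Mathlib


open MeasureTheory Set Filter

noncomputable section

/-- Total mass of a measure on ℝ, as a real number. -/
def mass (η : Measure ℝ) : ℝ := (η univ).toReal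

/-- Mean (first moment) of a measure on ℝ. -/
def mean (η : Measure ℝ) : ℝ := ∫ x, x ∂η

/-- `η ∈ 𝓜`: finite Borel measure on ℝ with finite first moment. -/
def MemM (η : Measure ℝ) : Prop := IsFiniteMeasure η ∧ Integrable (fun x => x) η

/-- Put potential `P_η(k) = ∫ (k-x)⁺ dη`. -/
def Pput (η : Measure ℝ) (k : ℝ) : ℝ := ∫ x, max (k - x) 0 ∂η

/-- Call potential `C_η(k) = ∫ (x-k)⁺ dη`. -/
def Ccall (η : Measure ℝ) (k : ℝ) : ℝ := ∫ x, max (x - k) 0 ∂η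

/-- `p_{μ,ν} = sup_k (P_μ(k) - P_ν(k))`. -/
def pconst (μ ν : Measure ℝ) : ℝ := ⨆ k : ℝ, (Pput μ k - Pput ν k)

/-- `c_{μ,ν} = sup_k (C_μ(k) - C_ν(k))`. -/
def cconst (μ ν : Measure ℝ) : ℝ := ⨆ k : ℝ, (Ccall μ k - Ccall ν k)

/-- `π ∈ Π(μ,ν)`: coupling with marginals μ and ν. -/
def IsCoupling (μ ν : Measure ℝ) (π : Measure (ℝ × ℝ)) : Prop :=
  π.fst = μ ∧ π.snd = ν

open Classical in
/-- Barycenter `π̄_x = ∫ y π_x(dy)` of the disintegration of π at x. -/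
def bar (π : Measure (ℝ × ℝ)) (x : ℝ) : ℝ :=
  if h : IsFiniteMeasure π then
    haveI := h
    ∫ y, y ∂(π.condKernel x)
  else 0

/-- Weak `L¹` transport cost `∫ |x - π̄_x| μ(dx)`. -/
def WOTcost (μ : Measure ℝ) (π : Measure (ℝ × ℝ)) : ℝ := ∫ x, |x - bar π x| ∂μ

/-- `V(μ,ν) = inf over couplings of the weak L¹ cost`. -/
def V (μ ν : Measure ℝ) : ℝ :=
  sInf {r | ∃ π, IsCoupling μ ν π ∧ r = WOTcost μ π}

/-- Martingale couplings. -/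
def IsMartCoupling (μ ν : Measure ℝ) (π : Measure (ℝ × ℝ)) : Prop :=
  IsCoupling μ ν π ∧ ∀ᵐ x ∂μ, bar π x = x

/-- Supermartingale couplings. -/
def IsSupCoupling (μ ν : Measure ℝ) (π : Measure (ℝ × ℝ)) : Prop :=
  IsCoupling μ ν π ∧ ∀ᵐ x ∂μ, bar π x ≤ x

/-- Submartingale couplings. -/
def IsSubCoupling (μ ν : Measure ℝ) (π : Measure (ℝ × ℝ)) : Prop :=
  IsCoupling μ ν π ∧ ∀ᵐ x ∂μ, x ≤ bar π x

/-- `x⁻ = inf {k : P_ν(k) + p_{μ,ν} = P_μ(k)}`. -/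
def xminus (μ ν : Measure ℝ) : ℝ := sInf {k | Pput ν k + pconst μ ν = Pput μ k}

/-- `x⁺ = sup {k : P_ν(k) + p_{μ,ν} = P_μ(k)}`. -/
def xplus (μ ν : Measure ℝ) : ℝ := sSup {k | Pput ν k + pconst μ ν = Pput μ k}

/-- Left derivative. -/
def leftD (f : ℝ → ℝ) (x : ℝ) : ℝ := derivWithin f (Iio x) x

/-- Right derivative. -/
def rightD (f : ℝ → ℝ) (x : ℝ) : ℝ := derivWithin f (Ioi x) x

/-- `η⁻ = μ|_{(-∞,x⁻)}`. -/
def etaMinus (μ ν : Measure ℝ) : Measure ℝ := μ.restrict (Iio (xminus μ ν))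

/-- `η⁰ = μ|_{[x⁻,x⁺]}`. -/
def etaZero (μ ν : Measure ℝ) : Measure ℝ := μ.restrict (Icc (xminus μ ν) (xplus μ ν))

/-- `η⁺ = μ|_{(x⁺,∞)}`. -/
def etaPlus (μ ν : Measure ℝ) : Measure ℝ := μ.restrict (Ioi (xplus μ ν))

/-- `χ⁻ = ν|_{(-∞,x⁻)} + (Δ⁻ - P_ν'(x⁻-)) δ_{x⁻}`. -/
def chiMinus (μ ν : Measure ℝ) : Measure ℝ :=
  ν.restrict (Iio (xminus μ ν)) +
    (ENNReal.ofReal (leftD (Pput μ) (xminus μ ν) - leftD (Pput ν) (xminus μ ν))) •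
      Measure.dirac (xminus μ ν)

/-- `χ⁺ = ν|_{(x⁺,∞)} + (Δ⁺ - P_ν'(x⁺+)) δ_{x⁺}`. -/
def chiPlus (μ ν : Measure ℝ) : Measure ℝ :=
  ν.restrict (Ioi (xplus μ ν)) +
    (ENNReal.ofReal (rightD (Pput μ) (xplus μ ν) - rightD (Pput ν) (xplus μ ν))) •
      Measure.dirac (xplus μ ν)

/-- `χ⁰ = ν - χ⁻ - χ⁺`. -/
def chiZero (μ ν : Measure ℝ) : Measure ℝ := ν - chiMinus μ ν - chiPlus μ ν

/-- `Π*(μ,ν)`: couplings of the form sub + martingale + super on the decomposition. -/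
def PiStar (μ ν : Measure ℝ) : Set (Measure (ℝ × ℝ)) :=
  {π | IsCoupling μ ν π ∧
    ∃ πm π0 πp : Measure (ℝ × ℝ),
      π = πm + π0 + πp ∧
      IsSubCoupling (etaMinus μ ν) (chiMinus μ ν) πm ∧
      IsMartCoupling (etaZero μ ν) (chiZero μ ν) π0 ∧
      IsSupCoupling (etaPlus μ ν) (chiPlus μ ν) πp}

/-- Convex order `η ≤_c χ`. -/
def CxOrder (η χ : Measure ℝ) : Prop :=
  ∀ f : ℝ → ℝ, ConvexOn ℝ univ f → Integrable f η → Integrable f χ →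
    ∫ x, f x ∂η ≤ ∫ x, f x ∂χ

/-- Convex decreasing order `η ≤_cd χ`. -/
def CdOrder (η χ : Measure ℝ) : Prop :=
  ∀ f : ℝ → ℝ, ConvexOn ℝ univ f → Antitone f → Integrable f η → Integrable f χ →
    ∫ x, f x ∂η ≤ ∫ x, f x ∂χ

/-- Convex increasing order `η ≤_ci χ`. -/
def CiOrder (η χ : Measure ℝ) : Prop :=
  ∀ f : ℝ → ℝ, ConvexOn ℝ univ f → Monotone f → Integrable f η → Integrable f χ →
    ∫ x, f x ∂η ≤ ∫ x, f x ∂χ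

/-- Convex hull (largest convex minorant) of a function. -/
def convHullFn (f : ℝ → ℝ) : ℝ → ℝ :=
  fun x => sSup {v : ℝ | ∃ g : ℝ → ℝ, ConvexOn ℝ univ g ∧ (∀ y, g y ≤ f y) ∧ v = g x}

/-- `S` is the generalized shadow measure of μ in ν, characterized by its put potential. -/
def IsShadow (μ ν S : Measure ℝ) : Prop :=
  MemM S ∧
    ∀ k, Pput S k = Pput ν k - convHullFn (fun t => Pput ν t - Pput μ t) k - pconst μ ν

/-- `𝒯_{μ,ν}`: possible target laws of μ in ν. -/
def TargetSet (μ ν : Measure ℝ) : Set (Measure ℝ) :=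
  {θ | MemM θ ∧ mass θ = mass μ ∧ θ ≤ ν}


lemma coupling_fin {μ ν : Measure ℝ} {π : Measure (ℝ × ℝ)} (hc : IsCoupling μ ν π)
    (hμ : IsFiniteMeasure μ) : IsFiniteMeasure π := by
  constructor
  have : π.fst univ = π univ := Measure.fst_univ
  rw [hc.1] at this
  rw [← this]
  exact measure_lt_top μ univ

lemma snd_integrable {μ ν : Measure ℝ} {π : Measure (ℝ × ℝ)} (hc : IsCoupling μ ν π)
    (hν : Integrable (fun x => x) ν) : Integrable (fun p : ℝ × ℝ => p.2) π := by
  have : Integrable (fun y : ℝ => y) π.snd := hc.2 ▸ hν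
  rw [Measure.snd, integrable_map_measure (aestronglyMeasurable_id.congr (EventuallyEq.rfl) : AEStronglyMeasurable (fun y : ℝ => y) (Measure.map Prod.snd π)) measurable_snd.aemeasurable] at this
  exact this

lemma integral_bar {μ ν : Measure ℝ} {π : Measure (ℝ × ℝ)} (hc : IsCoupling μ ν π)
    (hμ : IsFiniteMeasure μ) (hν : Integrable (fun x => x) ν) :
    ∫ x, bar π x ∂μ = mean ν := by
  haveI hfin := coupling_fin hc hμ
  have h1 : ∀ x, bar π x = ∫ y, y ∂(π.condKernel x) := fun x => dif_pos hfin
  simp_rw [h1]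
  rw [← hc.1]
  rw [Measure.integral_condKernel (f := fun p : ℝ × ℝ => p.2) (snd_integrable hc hν)]
  rw [mean, ← hc.2, Measure.snd, integral_map measurable_snd.aemeasurable (aestronglyMeasurable_id.congr (EventuallyEq.rfl) : AEStronglyMeasurable (fun y : ℝ => y) (Measure.map Prod.snd π))]

lemma integrable_bar {μ ν : Measure ℝ} {π : Measure (ℝ × ℝ)} (hc : IsCoupling μ ν π)
    (hμ : IsFiniteMeasure μ) (hν : Integrable (fun x => x) ν) :
    Integrable (bar π) μ := by
  haveI hfin := coupling_fin hc hμ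
  have h1 : bar π = fun x => ∫ y, y ∂(π.condKernel x) := funext fun x => dif_pos hfin
  rw [h1, ← hc.1]
  exact (snd_integrable hc hν).integral_condKernel

lemma cost_lower {μ ν : Measure ℝ} {π : Measure (ℝ × ℝ)} (hc : IsCoupling μ ν π)
    (hμ : MemM μ) (hν : MemM ν) : |mean μ - mean ν| ≤ WOTcost μ π := by
  haveI := hμ.1
  have hint : Integrable (fun x => x - bar π x) μ := hμ.2.sub (integrable_bar hc hμ.1 hν.2)
  have : mean μ - mean ν = ∫ x, (x - bar π x) ∂μ := by
    rw [integral_sub hμ.2 (integrable_bar hc hμ.1 hν.2), integral_bar hc hμ.1 hν.2]; rfl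
  rw [this]
  calc |∫ x, (x - bar π x) ∂μ| ≤ ∫ x, |x - bar π x| ∂μ := by
        simpa [Real.norm_eq_abs] using
          norm_integral_le_integral_norm (μ := μ) (fun x => x - bar π x)
    _ = WOTcost μ π := rfl

lemma wot_eq_sub {μ ν : Measure ℝ} {π : Measure (ℝ × ℝ)} (hc : IsCoupling μ ν π)
    (hμ : MemM μ) (hν : MemM ν) (hae : ∀ᵐ x ∂μ, bar π x ≤ x) :
    WOTcost μ π = mean μ - mean ν ∧ 0 ≤ mean μ - mean ν := by
  haveI := hμ.1
  have hib := integrable_bar hc hμ.1 hν.2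
  have h1 : WOTcost μ π = ∫ x, (x - bar π x) ∂μ := by
    refine integral_congr_ae ?_
    filter_upwards [hae] with x hx
    exact abs_of_nonneg (sub_nonneg.2 hx)
  have h2 : ∫ x, (x - bar π x) ∂μ = mean μ - mean ν := by
    rw [integral_sub hμ.2 hib, integral_bar hc hμ.1 hν.2]; rfl
  refine ⟨h1.trans h2, ?_⟩
  rw [← h2]
  refine integral_nonneg_of_ae ?_
  filter_upwards [hae] with x hx
  exact sub_nonneg.2 hx

lemma V_eq {μ ν : Measure ℝ} {π : Measure (ℝ × ℝ)} (hc : IsCoupling μ ν π)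
    (hμ : MemM μ) (hν : MemM ν) (habs : WOTcost μ π = |mean μ - mean ν|) :
    V μ ν = WOTcost μ π := by
  have hmem : WOTcost μ π ∈ {r | ∃ π', IsCoupling μ ν π' ∧ r = WOTcost μ π'} := ⟨π, hc, rfl⟩
  have hlb : ∀ r ∈ {r | ∃ π', IsCoupling μ ν π' ∧ r = WOTcost μ π'}, WOTcost μ π ≤ r := by
    rintro r ⟨π', hc', rfl⟩
    rw [habs]
    exact cost_lower hc' hμ hν
  exact le_antisymm (csInf_le ⟨WOTcost μ π, hlb⟩ hmem) (le_csInf ⟨_, hmem⟩ hlb)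

theorem stmt_9 (μ ν : Measure ℝ) (hμ : MemM μ) (hν : MemM ν)
    (hmass : mass μ = mass ν) :
    (CdOrder μ ν → ∀ π, IsSupCoupling μ ν π →
      V μ ν = WOTcost μ π ∧ WOTcost μ π = |mean μ - mean ν| ∧
      |mean μ - mean ν| = mean μ - mean ν) ∧
    (CiOrder μ ν → ∀ π, IsSubCoupling μ ν π →
      V μ ν = WOTcost μ π ∧ WOTcost μ π = |mean μ - mean ν| ∧
      |mean μ - mean ν| = mean ν - mean μ) := by
  constructor
  · intro _ π hπ
    obtain ⟨heq, hpos⟩ := wot_eq_sub hπ.1 hμ hν hπ.2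
    have habs : |mean μ - mean ν| = mean μ - mean ν := abs_of_nonneg hpos
    have h2 : WOTcost μ π = |mean μ - mean ν| := heq.trans habs.symm
    exact ⟨V_eq hπ.1 hμ hν h2, h2, habs⟩
  · intro _ π hπ
    have hc' : IsCoupling ν μ (π.map Prod.swap) := by
      obtain ⟨h1, h2⟩ := hπ.1
      constructor
      · rw [← h2, Measure.snd, Measure.fst,
          Measure.map_map measurable_fst measurable_swap]
        rfl
      · rw [← h1, Measure.snd, Measure.fst,
          Measure.map_map measurable_snd measurable_swap]
        rfl
    -- direct approach instead: mimic wot_eq_sub with reversed sign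
    haveI := hμ.1
    have hib := integrable_bar hπ.1 hμ.1 hν.2
    have h1 : WOTcost μ π = ∫ x, (bar π x - x) ∂μ := by
      refine integral_congr_ae ?_
      filter_upwards [hπ.2] with x hx
      rw [abs_sub_comm]
      exact abs_of_nonneg (sub_nonneg.2 hx)
    have h2 : ∫ x, (bar π x - x) ∂μ = mean ν - mean μ := by
      rw [integral_sub hib hμ.2, integral_bar hπ.1 hμ.1 hν.2]; rfl
    have hpos : 0 ≤ mean ν - mean μ := by
      rw [← h2]
      refine integral_nonneg_of_ae ?_
      filter_upwards [hπ.2] with x hx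
      exact sub_nonneg.2 hx
    have habs : |mean μ - mean ν| = mean ν - mean μ := by
      rw [abs_sub_comm]; exact abs_of_nonneg hpos
    have h3 : WOTcost μ π = |mean μ - mean ν| := (h1.trans h2).trans habs.symm
    exact ⟨V_eq hπ.1 hμ hν h3, h3, habs⟩


end
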